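/- Let p, q be integers with p ≥ 2 and q ≥ 2, and let G be the simple graph on the vertex type Fin p ⊕ Fin q in which u_i (the i-th left vertex) is adjacent to v_j (the j-th right vertex) if and only if the pair (i, j) belongs to the (p,q)-broom edge set E', and no two left vertices and no two right vertices are adjacent. Then G is connected. -/

import Mathlib

/-- `f i = ⌊((i-1)(q-1))/(p-1)⌋ + 1`, floor taken over the rationals. -/
def broomF (p q i : ℤ) : ℤ := ⌊(((i : ℚ) - 1) * ((q : ℚ) - 1)) / ((p : ℚ) - 1)⌋ + 1

/-- `g j = ⌈((j-1)(p-1))/(q-1)⌉`, ceiling taken over the rationals. -/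
def broomG (p q j : ℤ) : ℤ := ⌈(((j : ℚ) - 1) * ((p : ℚ) - 1)) / ((q : ℚ) - 1)⌉

/-- `(i, j)` is an edge of the `(p,q)`-broom (1-based indices). -/
def broomEdge (p q i j : ℤ) : Prop :=
  (1 ≤ i ∧ i ≤ p ∧ j = broomF p q i) ∨ (2 ≤ j ∧ j ≤ q ∧ i = broomG p q j)

/-- The `(p,q)`-broom as a simple graph on `Fin p ⊕ Fin q`: the `i`-th left vertex is
adjacent to the `j`-th right vertex iff `(i, j)` (1-based) is a broom edge, and no two
vertices on the same side are adjacent. -/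
def broomGraph (p q : ℕ) : SimpleGraph (Fin p ⊕ Fin q) where
  Adj x y :=
    ∃ (i : Fin p) (j : Fin q),
      ((x = Sum.inl i ∧ y = Sum.inr j) ∨ (x = Sum.inr j ∧ y = Sum.inl i)) ∧
      broomEdge (p : ℤ) (q : ℤ) ((i : ℤ) + 1) ((j : ℤ) + 1)
  symm := by
    constructor
    rintro x y ⟨i, j, (⟨h1, h2⟩ | ⟨h1, h2⟩), he⟩
    · exact ⟨i, j, Or.inr ⟨h2, h1⟩, he⟩
    · exact ⟨i, j, Or.inl ⟨h2, h1⟩, he⟩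
  loopless := by
    constructor
    rintro x ⟨i, j, (⟨h1, h2⟩ | ⟨h1, h2⟩), -⟩ <;> subst h1 <;> simp at h2

lemma broomF_one (P Q : ℤ) : broomF P Q 1 = 1 := by
  simp [broomF]

lemma broomF_pos (P Q i : ℤ) (hP : 2 ≤ P) (hQ : 2 ≤ Q) (hi : 1 ≤ i) : 1 ≤ broomF P Q i := by
  have hi' : (1:ℚ) ≤ (i:ℚ) := by exact_mod_cast hi
  have hQ' : (2:ℚ) ≤ (Q:ℚ) := by exact_mod_cast hQ
  have hP' : (2:ℚ) ≤ (P:ℚ) := by exact_mod_cast hP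
  have h : (0:ℚ) ≤ (((i:ℚ)-1) * ((Q:ℚ)-1)) / ((P:ℚ)-1) := by
    apply div_nonneg <;> nlinarith
  have := Int.floor_nonneg.mpr h
  unfold broomF; omega

lemma broomF_le (P Q i : ℤ) (hP : 2 ≤ P) (hQ : 2 ≤ Q) (hi : i ≤ P) : broomF P Q i ≤ Q := by
  have hi' : (i:ℚ) ≤ (P:ℚ) := by exact_mod_cast hi
  have hQ' : (2:ℚ) ≤ (Q:ℚ) := by exact_mod_cast hQ
  have hP' : (2:ℚ) ≤ (P:ℚ) := by exact_mod_cast hP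
  have hd : (0:ℚ) < (P:ℚ) - 1 := by linarith
  have h : (((i:ℚ)-1) * ((Q:ℚ)-1)) / ((P:ℚ)-1) < (Q:ℚ) - 1 + 1 := by
    rw [div_lt_iff₀ hd]; nlinarith
  have := Int.floor_lt.mpr (by push_cast; linarith : (((i:ℚ)-1) * ((Q:ℚ)-1)) / ((P:ℚ)-1) < ((Q:ℤ):ℚ))
  unfold broomF; omega

lemma broomG_pos (P Q j : ℤ) (hP : 2 ≤ P) (hQ : 2 ≤ Q) (hj : 2 ≤ j) : 1 ≤ broomG P Q j := by
  have hj' : (2:ℚ) ≤ (j:ℚ) := by exact_mod_cast hj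
  have hQ' : (2:ℚ) ≤ (Q:ℚ) := by exact_mod_cast hQ
  have hP' : (2:ℚ) ≤ (P:ℚ) := by exact_mod_cast hP
  have hd : (0:ℚ) < (Q:ℚ) - 1 := by linarith
  have h : (0:ℚ) < (((j:ℚ)-1) * ((P:ℚ)-1)) / ((Q:ℚ)-1) := by
    apply div_pos <;> nlinarith
  have := Int.lt_ceil.mpr (by exact_mod_cast h : ((0:ℤ):ℚ) < (((j:ℚ)-1) * ((P:ℚ)-1)) / ((Q:ℚ)-1))
  unfold broomG; omega

lemma broomG_le (P Q j : ℤ) (hP : 2 ≤ P) (hQ : 2 ≤ Q) (hj : j ≤ Q) : broomG P Q j ≤ P := by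
  have hj' : (j:ℚ) ≤ (Q:ℚ) := by exact_mod_cast hj
  have hQ' : (2:ℚ) ≤ (Q:ℚ) := by exact_mod_cast hQ
  have hP' : (2:ℚ) ≤ (P:ℚ) := by exact_mod_cast hP
  have hd : (0:ℚ) < (Q:ℚ) - 1 := by linarith
  have h : (((j:ℚ)-1) * ((P:ℚ)-1)) / ((Q:ℚ)-1) ≤ ((P:ℤ):ℚ) := by
    rw [div_le_iff₀ hd]; push_cast; nlinarith
  exact Int.ceil_le.mpr h

lemma broomG_broomF (P Q i : ℤ) (hP : 2 ≤ P) (hQ : 2 ≤ Q) (hi : 1 ≤ i) :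
    broomG P Q (broomF P Q i) ≤ i - 1 := by
  have hQ' : (2:ℚ) ≤ (Q:ℚ) := by exact_mod_cast hQ
  have hP' : (2:ℚ) ≤ (P:ℚ) := by exact_mod_cast hP
  have hdP : (0:ℚ) < (P:ℚ) - 1 := by linarith
  have hdQ : (0:ℚ) < (Q:ℚ) - 1 := by linarith
  set x : ℚ := (((i:ℚ)-1) * ((Q:ℚ)-1)) / ((P:ℚ)-1) with hx
  have hfl : ((⌊x⌋ : ℚ)) ≤ x := Int.floor_le x
  have hxle : x * ((P:ℚ)-1) = ((i:ℚ)-1) * ((Q:ℚ)-1) := by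
    rw [hx, div_mul_cancel₀ _ hdP.ne']
  apply Int.ceil_le.mpr
  rw [div_le_iff₀ hdQ]
  have hF : ((broomF P Q i : ℤ) : ℚ) - 1 = (⌊x⌋ : ℚ) := by
    unfold broomF; push_cast; ring
  rw [hF]
  push_cast
  nlinarith

/-- the `(p,q)`-broom graph is connected. -/
theorem broomGraph_connected (p q : ℕ) (hp : 2 ≤ p) (hq : 2 ≤ q) :
    (broomGraph p q).Connected := by
  have hP : 2 ≤ (p:ℤ) := by exact_mod_cast hp
  have hQ : 2 ≤ (q:ℤ) := by exact_mod_cast hq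
  have hp1 : 0 < p := by omega
  have hq1 : 0 < q := by omega
  set u0 : Fin p ⊕ Fin q := Sum.inl ⟨0, hp1⟩ with hu0
  have adjF : ∀ (i : Fin p) (j : Fin q), ((j:ℤ)+1 = broomF p q ((i:ℤ)+1)) →
      (broomGraph p q).Adj (Sum.inl i) (Sum.inr j) := by
    intro i j h
    exact ⟨i, j, Or.inl ⟨rfl, rfl⟩,
      Or.inl ⟨by omega, by have := i.isLt; omega, h⟩⟩
  have adjG : ∀ (i : Fin p) (j : Fin q), (1 ≤ (j:ℕ)) → ((i:ℤ)+1 = broomG p q ((j:ℤ)+1)) →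
      (broomGraph p q).Adj (Sum.inl i) (Sum.inr j) := by
    intro i j hj h
    exact ⟨i, j, Or.inl ⟨rfl, rfl⟩,
      Or.inr ⟨by omega, by have := j.isLt; omega, h⟩⟩
  -- u0 is adjacent to v0
  have adj00 : (broomGraph p q).Adj u0 (Sum.inr ⟨0, hq1⟩) := by
    apply adjF
    simp [broomF_one]
  -- reachability of all left vertices from u0
  have reachU : ∀ n : ℕ, ∀ i : Fin p, (i:ℕ) = n →
      (broomGraph p q).Reachable u0 (Sum.inl i) := by
    intro n
    induction n using Nat.strong_induction_on with
    | _ n ih =>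
      intro i hi
      rcases Nat.eq_zero_or_pos (i:ℕ) with h0 | h0
      · have : i = ⟨0, hp1⟩ := Fin.ext h0
        rw [this]
      · -- i ≥ 1
        have hi1 : (1:ℤ) ≤ (i:ℤ) + 1 := by omega
        have hiP : (i:ℤ) + 1 ≤ p := by have := i.isLt; omega
        set F : ℤ := broomF p q ((i:ℤ)+1) with hFdef
        have hF1 : 1 ≤ F := broomF_pos _ _ _ hP hQ hi1
        have hFq : F ≤ q := broomF_le _ _ _ hP hQ hiP
        have hjlt : (F-1).toNat < q := by omega
        set j : Fin q := ⟨(F-1).toNat, hjlt⟩ with hjdef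
        have hjF : (j:ℤ) + 1 = F := by
          simp [hjdef]
          omega
        have hadj : (broomGraph p q).Adj (Sum.inl i) (Sum.inr j) := adjF i j (by rw [hjF])
        rcases eq_or_lt_of_le hF1 with hF1' | hF2
        · -- F = 1, so j = v0, reachable via u0 ~ v0
          have : j = ⟨0, hq1⟩ := by apply Fin.ext; simp [hjdef]; omega
          rw [this] at hadj
          exact adj00.reachable.trans hadj.symm.reachable
        · -- F ≥ 2
          have hG1 : 1 ≤ broomG p q F := broomG_pos _ _ _ hP hQ (by omega)
          have hGle : broomG p q F ≤ (i:ℤ) := by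
            have := broomG_broomF (p:ℤ) q ((i:ℤ)+1) hP hQ hi1
            rw [← hFdef] at this
            omega
          have hklt : (broomG p q F - 1).toNat < p := by have := i.isLt; omega
          set k : Fin p := ⟨(broomG p q F - 1).toNat, hklt⟩ with hkdef
          have hkn : (k:ℕ) < n := by simp [hkdef]; omega
          have hadj2 : (broomGraph p q).Adj (Sum.inl k) (Sum.inr j) := by
            apply adjG k j (by simp [hjdef]; omega)
            rw [hjF]
            simp [hkdef]
            omega
          exact ((ih _ hkn k rfl).trans hadj2.reachable).trans hadj.symm.reachable
  have reachU' : ∀ i : Fin p, (broomGraph p q).Reachable u0 (Sum.inl i) :=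
    fun i => reachU _ i rfl
  have reachV : ∀ j : Fin q, (broomGraph p q).Reachable u0 (Sum.inr j) := by
    intro j
    rcases Nat.eq_zero_or_pos (j:ℕ) with h0 | h0
    · have : j = ⟨0, hq1⟩ := Fin.ext h0
      rw [this]; exact adj00.reachable
    · have hj2 : (2:ℤ) ≤ (j:ℤ) + 1 := by omega
      have hjQ : (j:ℤ) + 1 ≤ q := by have := j.isLt; omega
      have hG1 : 1 ≤ broomG p q ((j:ℤ)+1) := broomG_pos _ _ _ hP hQ hj2
      have hGle : broomG p q ((j:ℤ)+1) ≤ p := broomG_le _ _ _ hP hQ hjQ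
      have hklt : (broomG p q ((j:ℤ)+1) - 1).toNat < p := by omega
      set k : Fin p := ⟨(broomG p q ((j:ℤ)+1) - 1).toNat, hklt⟩ with hkdef
      have hadj : (broomGraph p q).Adj (Sum.inl k) (Sum.inr j) := by
        apply adjG k j h0
        simp [hkdef]
        omega
      exact (reachU' k).trans hadj.reachable
  rw [SimpleGraph.connected_iff]
  refine ⟨?_, ⟨u0⟩⟩
  intro x y
  have hx : (broomGraph p q).Reachable u0 x := by
    cases x with
    | inl i => exact reachU' i
    | inr j => exact reachV j
  have hy : (broomGraph p q).Reachable u0 y := by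
    cases y with
    | inl i => exact reachU' i
    | inr j => exact reachV j
  exact hx.symm.trans hy
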